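/- Let μ₁, μ₂ : [0,1] → ℝ be continuous. If ∫₀¹ (μ₁(α) - μ₂(α))·(n·N)^α dα = 0 for all positive integers n (with N a fixed positive integer), then μ₁ = μ₂ on [0,1]. -/

import Mathlib

open MeasureTheory intervalIntegral Polynomial Real

theorem stmt_12 (N : ℕ+) (μ₁ μ₂ : ℝ → ℝ)
    (h₁ : ContinuousOn μ₁ (Set.Icc 0 1)) (h₂ : ContinuousOn μ₂ (Set.Icc 0 1))
    (horth : ∀ n : ℕ+,
      ∫ α in (0:ℝ)..1, (μ₁ α - μ₂ α) * Real.exp (α * Real.log ((n : ℝ) * (N : ℝ))) = 0) :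
    Set.EqOn μ₁ μ₂ (Set.Icc 0 1) := by
  -- choose a base b > 1 with b^(k+1) of the form n * N
  obtain ⟨b, hb, hpow⟩ : ∃ b : ℝ, 1 < b ∧ ∀ k : ℕ, ∃ n : ℕ+, (n : ℝ) * (N : ℝ) = b ^ (k + 1) := by
    rcases eq_or_ne N 1 with hN | hN
    · exact ⟨2, one_lt_two, fun k => ⟨2 ^ (k + 1), by subst hN; push_cast; ring⟩⟩
    · refine ⟨(N : ℝ), ?_, fun k => ⟨N ^ k, by push_cast; ring⟩⟩
      have : (1 : ℕ+) < N := lt_of_le_of_ne N.one_le (Ne.symm hN)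
      exact_mod_cast this
  set c : ℝ := Real.log b with hc
  have hc0 : 0 < c := Real.log_pos hb
  set g : ℝ → ℝ := fun α => (μ₁ α - μ₂ α) * Real.exp (c * α) with hgdef
  have hgc : ContinuousOn g (Set.Icc 0 1) :=
    (h₁.sub h₂).mul (Real.continuous_exp.comp (continuous_const.mul continuous_id)).continuousOn
  have huIcc : Set.uIcc (0:ℝ) 1 = Set.Icc 0 1 := Set.uIcc_of_le zero_le_one
  -- key vanishing against powers of exp (c α)
  have key : ∀ k : ℕ, (∫ α in (0:ℝ)..1, g α * Real.exp (c * α) ^ k) = 0 := by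
    intro k
    obtain ⟨n, hn⟩ := hpow k
    have congrint : (∫ α in (0:ℝ)..1, g α * Real.exp (c * α) ^ k)
        = ∫ α in (0:ℝ)..1, (μ₁ α - μ₂ α) * Real.exp (α * Real.log ((n : ℝ) * (N : ℝ))) := by
      apply intervalIntegral.integral_congr
      intro α _
      have hlog : Real.log ((n : ℝ) * (N : ℝ)) = (k + 1) * c := by
        rw [hn, Real.log_pow]; push_cast; ring
      rw [hlog, hgdef]
      simp only
      rw [← Real.exp_nat_mul, mul_assoc, ← Real.exp_add]
      congr 2
      ring
    rw [congrint]; exact horth n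
  -- vanishing against polynomials in exp (c α)
  have poly : ∀ q : ℝ[X], (∫ α in (0:ℝ)..1, g α * q.eval (Real.exp (c * α))) = 0 := by
    intro q
    induction q using Polynomial.induction_on' with
    | add p r hp hr =>
      have ip : IntervalIntegrable (fun α => g α * p.eval (Real.exp (c * α))) volume 0 1 := by
        apply ContinuousOn.intervalIntegrable
        rw [huIcc]
        exact hgc.mul ((p.continuous_aeval).comp
          (Real.continuous_exp.comp (continuous_const.mul continuous_id))).continuousOn
      have ir : IntervalIntegrable (fun α => g α * r.eval (Real.exp (c * α))) volume 0 1 := by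
        apply ContinuousOn.intervalIntegrable
        rw [huIcc]
        exact hgc.mul ((r.continuous_aeval).comp
          (Real.continuous_exp.comp (continuous_const.mul continuous_id))).continuousOn
      have : (∫ α in (0:ℝ)..1, g α * (p + r).eval (Real.exp (c * α)))
          = (∫ α in (0:ℝ)..1, g α * p.eval (Real.exp (c * α)))
            + ∫ α in (0:ℝ)..1, g α * r.eval (Real.exp (c * α)) := by
        rw [← intervalIntegral.integral_add ip ir]
        apply intervalIntegral.integral_congr
        intro α _
        simp [Polynomial.eval_add]; ring
      rw [this, hp, hr, add_zero]
    | monomial n a =>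
      simp only [Polynomial.eval_monomial]
      have : (∫ α in (0:ℝ)..1, g α * (a * Real.exp (c * α) ^ n))
          = a * ∫ α in (0:ℝ)..1, g α * Real.exp (c * α) ^ n := by
        rw [← intervalIntegral.integral_const_mul]
        apply intervalIntegral.integral_congr
        intro α _; ring
      rw [this, key n, mul_zero]
  -- Stone-Weierstrass setup on the compact space Icc 0 1
  haveI : CompactSpace (Set.Icc (0:ℝ) 1) := isCompact_iff_compactSpace.mp isCompact_Icc
  set X := Set.Icc (0:ℝ) 1
  set e : C(X, ℝ) := ⟨fun x => Real.exp (c * (x : ℝ)),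
    Real.continuous_exp.comp (continuous_const.mul continuous_subtype_val)⟩ with he
  set A : Subalgebra ℝ C(X, ℝ) := Algebra.adjoin ℝ {e} with hA
  have hsep : A.SeparatesPoints := by
    intro x y hxy
    refine ⟨e, ⟨e, Algebra.subset_adjoin rfl, rfl⟩, ?_⟩
    intro h
    apply hxy
    apply Subtype.ext
    have := Real.exp_injective h
    exact mul_left_cancel₀ hc0.ne' this
  set G : C(X, ℝ) := ⟨X.restrict g, hgc.restrict⟩ with hG
  -- bound on g
  obtain ⟨M, hM⟩ := isCompact_Icc.exists_bound_of_continuousOn hgc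
  have hM0 : 0 ≤ M := le_trans (norm_nonneg _) (hM 0 ⟨le_refl _, zero_le_one⟩)
  -- ∫ g^2 = 0
  have hgsq : (∫ α in (0:ℝ)..1, g α ^ 2) = 0 := by
    have nonneg : 0 ≤ ∫ α in (0:ℝ)..1, g α ^ 2 :=
      intervalIntegral.integral_nonneg zero_le_one (fun u _ => sq_nonneg _)
    refine le_antisymm (le_of_forall_pos_le_add fun ε hε => ?_) nonneg
    have hε' : 0 < ε / (M + 1) := div_pos hε (by linarith)
    obtain ⟨⟨g', hg'A⟩, hnear⟩ :=
      ContinuousMap.exists_mem_subalgebra_near_continuousMap_of_separatesPoints A hsep G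
        (ε / (M + 1)) hε'
    rw [hA, Algebra.adjoin_singleton_eq_range_aeval] at hg'A
    obtain ⟨q, rfl⟩ := hg'A
    set P : ℝ → ℝ := fun α => q.eval (Real.exp (c * α)) with hP
    have hPc : Continuous P := (q.continuous_aeval).comp
      (Real.continuous_exp.comp (continuous_const.mul continuous_id))
    have hdist : ∀ α ∈ Set.Icc (0:ℝ) 1, |P α - g α| < ε / (M + 1) := by
      intro α hα
      have := ContinuousMap.norm_lt_iff _ hε' |>.mp hnear ⟨α, hα⟩
      have hGα : (⟨X.restrict g, hgc.restrict⟩ : C(X, ℝ)) ⟨α, hα⟩ = g α := rfl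
      simpa [hP, Polynomial.aeval_continuousMap_apply, he, hG, Real.norm_eq_abs, hGα] using this
    have igg : IntervalIntegrable (fun α => g α * (g α - P α)) volume 0 1 := by
      apply ContinuousOn.intervalIntegrable
      rw [huIcc]
      exact hgc.mul (hgc.sub hPc.continuousOn)
    have igP : IntervalIntegrable (fun α => g α * P α) volume 0 1 := by
      apply ContinuousOn.intervalIntegrable
      rw [huIcc]
      exact hgc.mul hPc.continuousOn
    have split : (∫ α in (0:ℝ)..1, g α ^ 2)
        = (∫ α in (0:ℝ)..1, g α * (g α - P α)) + ∫ α in (0:ℝ)..1, g α * P α := by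
      rw [← intervalIntegral.integral_add igg igP]
      apply intervalIntegral.integral_congr
      intro α _; ring
    rw [split, poly q, add_zero]
    have bound : ‖∫ α in (0:ℝ)..1, g α * (g α - P α)‖ ≤ M * (ε / (M + 1)) * |1 - 0| := by
      apply intervalIntegral.norm_integral_le_of_norm_le_const
      intro α hα
      have hα' : α ∈ Set.Icc (0:ℝ) 1 := by
        rw [Set.uIoc_of_le zero_le_one] at hα
        exact Set.Ioc_subset_Icc_self hα
      calc ‖g α * (g α - P α)‖ = ‖g α‖ * ‖g α - P α‖ := norm_mul _ _
        _ ≤ M * (ε / (M + 1)) := by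
            apply mul_le_mul (hM α hα') ?_ (norm_nonneg _) hM0
            rw [Real.norm_eq_abs, abs_sub_comm]
            exact le_of_lt (hdist α hα')
    rw [Real.norm_eq_abs] at bound
    have : (∫ α in (0:ℝ)..1, g α * (g α - P α)) ≤ M * (ε / (M + 1)) :=
      le_trans (le_abs_self _) (by simpa using bound)
    have hMle : M * (ε / (M + 1)) ≤ ε := by
      rw [mul_div_assoc' M ε (M+1), div_le_iff₀ (by linarith : (0:ℝ) < M + 1)]
      nlinarith
    linarith
  -- conclude g = 0 on Icc, hence μ₁ = μ₂
  have igsq : IntervalIntegrable (fun α => g α ^ 2) volume 0 1 := by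
    apply ContinuousOn.intervalIntegrable
    rw [huIcc]; exact hgc.pow 2
  have haesq : (fun α => g α ^ 2) =ᵐ[volume.restrict (Set.Ioc (0:ℝ) 1)] 0 := by
    rw [← intervalIntegral.integral_eq_zero_iff_of_le_of_nonneg_ae zero_le_one
      (Filter.Eventually.of_forall fun u => sq_nonneg _) igsq]
    exact hgsq
  have haesq' : (fun α => g α ^ 2) =ᵐ[volume.restrict (Set.Icc (0:ℝ) 1)] 0 := by
    rwa [Measure.restrict_congr_set MeasureTheory.Ioc_ae_eq_Icc] at haesq
  have heq : Set.EqOn (fun α => g α ^ 2) 0 (Set.Icc (0:ℝ) 1) :=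
    Measure.eqOn_Icc_of_ae_eq volume (by norm_num) haesq' (hgc.pow 2) continuousOn_const
  intro x hx
  have hx2 : g x ^ 2 = 0 := heq hx
  have hgx : g x = 0 := by
    have := sq_eq_zero_iff.mp hx2
    exact this
  have hexp : Real.exp (c * x) ≠ 0 := (Real.exp_pos _).ne'
  have : μ₁ x - μ₂ x = 0 := by
    rcases mul_eq_zero.mp hgx with h | h
    · exact h
    · exact absurd h hexp
  linarith
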